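/- For any probability vector p in the J-simplex, tuning parameters (β, λ) with A = 1 + λ(1-β) > 0 and B = β - λ(1-β) > 0 and 0 ≤ β ≤ 1, the total SD-loss over the J one-hot labels satisfies J^{1-β}/A - ((1+β)/(AB))·max(1, J^{1-B}) + J²/B ≤ Σ_{j=1}^J ℓ_{β,λ}(e_j, p) ≤ J/A - ((1+β)/(AB))·min(1, J^{1-B}) + J²/B. -/

import Mathlib

open Finset

/-- The SD-loss `ℓ_{β,λ}(u, p)` for a label vector `u` and probability vector `p`,
written in terms of `A = 1 + λ(1-β)` and `B = β - λ(1-β)`. -/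
noncomputable def sdLoss (A B beta : ℝ) {J : ℕ} (u p : Fin J → ℝ) : ℝ :=
  (1 / A) * ∑ j, (p j ^ (1 + beta) - ((1 + beta) / B) * u j * p j ^ B + A / B)

/-- The `j`-th one-hot label `e_j`. -/
def oneHot {J : ℕ} (j : Fin J) : Fin J → ℝ := fun k => if k = j then 1 else 0

lemma sum_rpow_lower {J : ℕ} (hJ : 1 ≤ J) {c : ℝ} (hc : 1 ≤ c)
    (p : Fin J → ℝ) (hp0 : ∀ j, 0 ≤ p j) (hsum : ∑ j, p j = 1) :
    (J : ℝ) ^ (1 - c) ≤ ∑ j, p j ^ c := by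
  have hJ0 : (0:ℝ) < J := by exact_mod_cast hJ
  have h := Real.rpow_arith_mean_le_arith_mean_rpow Finset.univ
    (fun _ : Fin J => (J : ℝ)⁻¹) p (fun i _ => by positivity)
    (by simp [Finset.card_univ]; field_simp) (fun i _ => hp0 i) hc
  rw [show (∑ i, ((J:ℝ)⁻¹) * p i) = (J:ℝ)⁻¹ by rw [← Finset.mul_sum, hsum, mul_one],
    show (∑ i, ((J:ℝ)⁻¹) * p i ^ c) = (J:ℝ)⁻¹ * ∑ i, p i ^ c from (Finset.mul_sum _ _ _).symm,
    Real.inv_rpow hJ0.le, ← Real.rpow_neg hJ0.le] at h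
  have := mul_le_mul_of_nonneg_left h hJ0.le
  calc (J:ℝ) ^ (1 - c) = (J:ℝ) * (J:ℝ) ^ (-c) := by
        rw [show (1:ℝ) - c = 1 + (-c) by ring, Real.rpow_add hJ0, Real.rpow_one]
    _ ≤ (J:ℝ) * ((J:ℝ)⁻¹ * ∑ i, p i ^ c) := this
    _ = ∑ i, p i ^ c := by field_simp

lemma sum_rpow_upper_concave {J : ℕ} (hJ : 1 ≤ J) {c : ℝ} (hc0 : 0 < c) (hc : c ≤ 1)
    (p : Fin J → ℝ) (hp0 : ∀ j, 0 ≤ p j) (hsum : ∑ j, p j = 1) :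
    ∑ j, p j ^ c ≤ (J : ℝ) ^ (1 - c) := by
  have hJ0 : (0:ℝ) < J := by exact_mod_cast hJ
  have hq : 1 ≤ 1 / c := by rw [le_div_iff₀ hc0]; linarith
  have h := Real.arith_mean_le_rpow_mean Finset.univ
    (fun _ : Fin J => (J : ℝ)⁻¹) (fun j => p j ^ c) (fun i _ => by positivity)
    (by simp [Finset.card_univ]; field_simp) (fun i _ => Real.rpow_nonneg (hp0 i) c) hq
  have hz : ∀ i : Fin J, (p i ^ c) ^ (1/c) = p i := fun i => by
    rw [← Real.rpow_mul (hp0 i), mul_one_div_cancel hc0.ne', Real.rpow_one]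
  rw [show (∑ i, ((J:ℝ)⁻¹) * (p i ^ c) ^ (1/c)) = (J:ℝ)⁻¹ by
      simp only [hz]; rw [← Finset.mul_sum, hsum, mul_one],
    one_div_one_div,
    show (∑ i, ((J:ℝ)⁻¹) * p i ^ c) = (J:ℝ)⁻¹ * ∑ i, p i ^ c from (Finset.mul_sum _ _ _).symm,
    Real.inv_rpow hJ0.le, ← Real.rpow_neg hJ0.le] at h
  have := mul_le_mul_of_nonneg_left h hJ0.le
  calc ∑ i, p i ^ c = (J:ℝ) * ((J:ℝ)⁻¹ * ∑ i, p i ^ c) := by field_simp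
    _ ≤ (J:ℝ) * (J:ℝ) ^ (-c) := this
    _ = (J:ℝ) ^ (1 - c) := by
        rw [show (1:ℝ) - c = 1 + (-c) by ring, Real.rpow_add hJ0, Real.rpow_one]

lemma sum_rpow_le_one {J : ℕ} {c : ℝ} (hc : 1 ≤ c)
    (p : Fin J → ℝ) (hp0 : ∀ j, 0 ≤ p j) (hsum : ∑ j, p j = 1) :
    ∑ j, p j ^ c ≤ 1 := by
  have hp1 : ∀ j, p j ≤ 1 := by
    intro j
    rw [← hsum]
    exact Finset.single_le_sum (fun i _ => hp0 i) (Finset.mem_univ j)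
  calc ∑ j, p j ^ c ≤ ∑ j, p j := by
        apply Finset.sum_le_sum
        intro i _
        rcases eq_or_lt_of_le (hp0 i) with h | h
        · rw [← h, Real.zero_rpow (by linarith)]
        · calc p i ^ c ≤ p i ^ (1:ℝ) :=
                Real.rpow_le_rpow_of_exponent_ge h (hp1 i) hc
            _ = p i := Real.rpow_one _
    _ = 1 := hsum

lemma one_le_sum_rpow {J : ℕ} {c : ℝ} (hc0 : 0 < c) (hc : c ≤ 1)
    (p : Fin J → ℝ) (hp0 : ∀ j, 0 ≤ p j) (hsum : ∑ j, p j = 1) :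
    1 ≤ ∑ j, p j ^ c := by
  have hp1 : ∀ j, p j ≤ 1 := by
    intro j
    rw [← hsum]
    exact Finset.single_le_sum (fun i _ => hp0 i) (Finset.mem_univ j)
  calc (1:ℝ) = ∑ j, p j := hsum.symm
    _ ≤ ∑ j, p j ^ c := by
        apply Finset.sum_le_sum
        intro i _
        rcases eq_or_lt_of_le (hp0 i) with h | h
        · rw [← h, Real.zero_rpow hc0.ne']
        · calc p i = p i ^ (1:ℝ) := (Real.rpow_one _).symm
            _ ≤ p i ^ c := Real.rpow_le_rpow_of_exponent_ge h (hp1 i) hc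

lemma total_eq {J : ℕ} (A B beta : ℝ) (p : Fin J → ℝ) :
    ∑ j, sdLoss A B beta (oneHot j) p
      = (J : ℝ) * (∑ k, p k ^ (1 + beta)) / A
        - ((1 + beta) / (A * B)) * (∑ k, p k ^ B) + (J:ℝ)^2 * (1/B) * (A/A) := by
  have h1 : ∀ j : Fin J, sdLoss A B beta (oneHot j) p
      = (1/A) * ((∑ k, p k ^ (1+beta)) - ((1+beta)/B) * p j ^ B + (J:ℝ) * (A/B)) := by
    intro j
    unfold sdLoss oneHot
    congr 1
    have he : ∀ k : Fin J, (1+beta)/B * (if k = j then (1:ℝ) else 0) * p k ^ B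
        = (if k = j then ((1+beta)/B) * p j ^ B else 0) := by
      intro k
      split
      · next h => subst h; ring
      · simp
    simp only [he]
    rw [Finset.sum_add_distrib, Finset.sum_sub_distrib,
      Finset.sum_ite_eq' Finset.univ j, Finset.sum_const, Finset.card_univ,
      Fintype.card_fin, nsmul_eq_mul]
    simp
  simp only [h1]
  rw [← Finset.mul_sum, Finset.sum_add_distrib, Finset.sum_sub_distrib, Finset.sum_const,
    Finset.card_univ, Fintype.card_fin, nsmul_eq_mul, ← Finset.mul_sum, Finset.sum_const,
    Finset.card_univ, Fintype.card_fin, nsmul_eq_mul]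
  ring

/-- Bounds on the total SD-loss over the `J` one-hot labels. -/
theorem total_sdLoss_bounds (J : ℕ) (hJ : 1 ≤ J) (beta lam A B : ℝ)
    (hbeta0 : 0 ≤ beta) (hbeta1 : beta ≤ 1)
    (hA : A = 1 + lam * (1 - beta)) (hB : B = beta - lam * (1 - beta))
    (hApos : 0 < A) (hBpos : 0 < B)
    (p : Fin J → ℝ) (hp0 : ∀ j, 0 ≤ p j) (hsum : ∑ j, p j = 1) :
    (J : ℝ) ^ (1 - beta) / A - ((1 + beta) / (A * B)) * max 1 ((J : ℝ) ^ (1 - B))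
        + (J : ℝ) ^ 2 / B
      ≤ ∑ j, sdLoss A B beta (oneHot j) p ∧
    ∑ j, sdLoss A B beta (oneHot j) p
      ≤ (J : ℝ) / A - ((1 + beta) / (A * B)) * min 1 ((J : ℝ) ^ (1 - B))
        + (J : ℝ) ^ 2 / B := by
  have hJ0 : (0:ℝ) < J := by exact_mod_cast hJ
  have hAA : A / A = 1 := div_self hApos.ne'
  have htot : ∑ j, sdLoss A B beta (oneHot j) p
      = (J : ℝ) * (∑ k, p k ^ (1 + beta)) / A
        - ((1 + beta) / (A * B)) * (∑ k, p k ^ B) + (J:ℝ)^2 / B := by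
    rw [total_eq, hAA]; ring
  set S1 := ∑ k, p k ^ (1 + beta) with hS1
  set SB := ∑ k, p k ^ B with hSB
  have hcoef : 0 ≤ (1 + beta) / (A * B) := by
    apply div_nonneg (by linarith) (by positivity)
  have hc1 : (1:ℝ) ≤ 1 + beta := by linarith
  have hS1l : (J:ℝ) ^ (1 - (1 + beta)) ≤ S1 := sum_rpow_lower hJ hc1 p hp0 hsum
  have hS1u : S1 ≤ 1 := sum_rpow_le_one hc1 p hp0 hsum
  have hSBl : min 1 ((J:ℝ) ^ (1 - B)) ≤ SB := by
    rcases le_or_gt B 1 with h | h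
    · exact le_trans (min_le_left _ _) (one_le_sum_rpow hBpos h p hp0 hsum)
    · exact le_trans (min_le_right _ _) (sum_rpow_lower hJ h.le p hp0 hsum)
  have hSBu : SB ≤ max 1 ((J:ℝ) ^ (1 - B)) := by
    rcases le_or_gt B 1 with h | h
    · exact le_trans (sum_rpow_upper_concave hJ hBpos h p hp0 hsum) (le_max_right _ _)
    · exact le_trans (sum_rpow_le_one h.le p hp0 hsum) (le_max_left _ _)
  have hJS1l : (J:ℝ) ^ (1 - beta) ≤ (J:ℝ) * S1 := by
    calc (J:ℝ) ^ (1 - beta) = (J:ℝ) * (J:ℝ) ^ (1 - (1 + beta)) := by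
          rw [show (1:ℝ) - (1 + beta) = -beta by ring,
            show (1:ℝ) - beta = 1 + (-beta) by ring, Real.rpow_add hJ0, Real.rpow_one]
      _ ≤ (J:ℝ) * S1 := mul_le_mul_of_nonneg_left hS1l hJ0.le
  have hJS1u : (J:ℝ) * S1 ≤ (J:ℝ) := by
    calc (J:ℝ) * S1 ≤ (J:ℝ) * 1 := mul_le_mul_of_nonneg_left hS1u hJ0.le
      _ = (J:ℝ) := mul_one _
  have hdl : (J:ℝ) ^ (1 - beta) / A ≤ (J:ℝ) * S1 / A := by gcongr
  have hdu : (J:ℝ) * S1 / A ≤ (J:ℝ) / A := by gcongr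
  have hml : ((1 + beta) / (A * B)) * SB ≤ ((1 + beta) / (A * B)) * max 1 ((J:ℝ) ^ (1 - B)) :=
    mul_le_mul_of_nonneg_left hSBu hcoef
  have hmu : ((1 + beta) / (A * B)) * min 1 ((J:ℝ) ^ (1 - B)) ≤ ((1 + beta) / (A * B)) * SB :=
    mul_le_mul_of_nonneg_left hSBl hcoef
  rw [htot]
  constructor <;> linarith
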